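/- arXiv:2210.01598 — 2 statements merged into one kernel-verified Lean document; each statement's English description precedes it below -/
import Mathlib

section
/- Let T be a tournament with exactly ℓ non-trivial strong components (strong components with more than one vertex), and let Ext(T) denote the set of extreme vertices of T (vertices that are sources, sinks, or transitive). Then hn_{P3*}(T) = hn_g(T) = |Ext(T)| + 2ℓ. -/
/-! Basic machinery for convexity on oriented graphs. -/

/-- A directed walk along the arc relation `A` from `u` to `v`,
recorded as the (nonempty) list of its vertices. Its length is `l.length - 1`. -/
def DiWalk {V : Type*} (A : V → V → Prop) (u v : V) (l : List V) : Prop :=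
  l.head? = some u ∧ l.getLast? = some v ∧ l.Chain' A

/-- A shortest directed walk (geodesic) from `u` to `v`:
a directed walk of minimum length among all directed `(u,v)`-walks. -/
def IsGeodesic {V : Type*} (A : V → V → Prop) (u v : V) (l : List V) : Prop :=
  DiWalk A u v l ∧ ∀ l', DiWalk A u v l' → l.length ≤ l'.length

/-- Geodetic interval: `u`, `v`, and all vertices lying on a shortest directed
`(u,v)`-path or on a shortest directed `(v,u)`-path. -/
def geoInterval {V : Type*} (A : V → V → Prop) (u v : V) : Set V :=
  {u, v} ∪ {w | (∃ l, IsGeodesic A u v l ∧ w ∈ l) ∨ (∃ l, IsGeodesic A v u l ∧ w ∈ l)}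

/-- P3 interval: `u`, `v`, and all vertices lying on a directed `(u,v)`- or
`(v,u)`-path of length two. -/
def p3Interval {V : Type*} (A : V → V → Prop) (u v : V) : Set V :=
  {u, v} ∪ {w | (A u w ∧ A w v) ∨ (A v w ∧ A w u)}

/-- P3* interval: `u`, `v`, and all vertices lying on a shortest directed `(u,v)`- or
`(v,u)`-path of length two (i.e. the corresponding endpoints are not adjacent). -/
def p3sInterval {V : Type*} (A : V → V → Prop) (u v : V) : Set V :=
  {u, v} ∪ {w | (A u w ∧ A w v ∧ ¬ A u v) ∨ (A v w ∧ A w u ∧ ¬ A v u)}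

/-- A set is convex for the interval function `I` if it is closed under `I`. -/
def IsConvexSet {V : Type*} (I : V → V → Set V) (C : Set V) : Prop :=
  ∀ u ∈ C, ∀ v ∈ C, I u v ⊆ C

/-- The convex hull of `S`: the smallest convex set containing `S`. -/
def convexHullD {V : Type*} (I : V → V → Set V) (S : Set V) : Set V :=
  ⋂₀ {C | IsConvexSet I C ∧ S ⊆ C}

/-- `S` is an interval set if applying `I` to pairs of `S` covers all vertices. -/
def IsIntervalSet {V : Type*} (I : V → V → Set V) (S : Set V) : Prop :=
  (⋃ u ∈ S, ⋃ v ∈ S, I u v) = Set.univ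

/-- `S` is a hull set if its convex hull is the whole vertex set. -/
def IsHullSet {V : Type*} (I : V → V → Set V) (S : Set V) : Prop :=
  convexHullD I S = Set.univ

/-- The interval number: minimum cardinality of an interval set. -/
noncomputable def intervalNumber {V : Type*} (I : V → V → Set V) : ℕ :=
  sInf {k | ∃ S : Set V, IsIntervalSet I S ∧ S.ncard = k}

/-- The hull number: minimum cardinality of a hull set. -/
noncomputable def hullNumber {V : Type*} (I : V → V → Set V) : ℕ :=
  sInf {k | ∃ S : Set V, IsHullSet I S ∧ S.ncard = k}

/-- `v` is reachable from `u` by a directed walk. -/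
def Reach {V : Type*} (A : V → V → Prop) (u v : V) : Prop :=
  ∃ l, DiWalk A u v l

/-- An oriented graph: no loops and at most one arc between any two vertices. -/
def IsOriented {V : Type*} (A : V → V → Prop) : Prop :=
  ∀ u v, A u v → ¬ A v u

/-- Strong connectivity. -/
def StronglyConnected {V : Type*} (A : V → V → Prop) : Prop :=
  ∀ u v, Reach A u v

/-- Connectivity of the underlying undirected graph. -/
def ConnectedD {V : Type*} (A : V → V → Prop) : Prop :=
  ∀ u v : V, Reach (fun a b => A a b ∨ A b a) u v

/-- A strong component: an equivalence class of mutual reachability. -/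
def IsStrongComponent {V : Type*} (A : V → V → Prop) (C : Set V) : Prop :=
  ∃ v, C = {u | Reach A u v ∧ Reach A v u}

/-- A sink strong component: a strong component with no arc leaving it. -/
def IsSinkComponent {V : Type*} (A : V → V → Prop) (C : Set V) : Prop :=
  IsStrongComponent A C ∧ ∀ u ∈ C, ∀ w, w ∉ C → ¬ A u w

/-- A source strong component: a strong component with no arc entering it. -/
def IsSourceComponent {V : Type*} (A : V → V → Prop) (C : Set V) : Prop :=
  IsStrongComponent A C ∧ ∀ u ∈ C, ∀ w, w ∉ C → ¬ A w u

/-- The out-section of `u`: all vertices reachable from `u`. -/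
def outSection {V : Type*} (A : V → V → Prop) (u : V) : Set V :=
  {w | Reach A u w}

/-- The in-section of `u`: all vertices from which `u` is reachable. -/
def inSection {V : Type*} (A : V → V → Prop) (u : V) : Set V :=
  {w | Reach A w u}

/-- A tournament: an oriented graph where every two distinct vertices are adjacent. -/
def IsTournament {V : Type*} (A : V → V → Prop) : Prop :=
  (∀ u v, A u v → ¬ A v u) ∧ ∀ u v : V, u ≠ v → A u v ∨ A v u

/-- The number of arcs of the digraph given by `A`. -/
noncomputable def arcCount {V : Type*} (A : V → V → Prop) : ℕ :=
  Nat.card {p : V × V // A p.1 p.2}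

section Aux
variable {V : Type*} {A : V → V → Prop}

theorem diwalk_rtg : ∀ {l : List V} {u v : V}, DiWalk A u v l →
    Relation.ReflTransGen A u v := by
  intro l
  induction l with
  | nil => intro u v h; simp [DiWalk] at h
  | cons a t ih =>
    intro u v h
    obtain ⟨h1, h2, h3⟩ := h
    simp only [List.head?_cons, Option.some.injEq] at h1
    subst h1
    cases t with
    | nil =>
      simp only [List.getLast?_singleton, Option.some.injEq] at h2
      subst h2; exact .refl
    | cons b t' =>
      have hab : A a b := (List.isChain_cons_cons.mp h3).1
      have hw : DiWalk A b v (b :: t') :=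
        ⟨rfl, by rw [List.getLast?_cons_cons] at h2; exact h2, (List.isChain_cons_cons.mp h3).2⟩
      exact .head hab (ih hw)

theorem rtg_diwalk {u v : V} (h : Relation.ReflTransGen A u v) :
    ∃ l, DiWalk A u v l := by
  induction h using Relation.ReflTransGen.head_induction_on with
  | refl => exact ⟨[v], rfl, by simp, List.isChain_singleton _⟩
  | head hac hcb ih =>
    obtain ⟨l, h1, h2, h3⟩ := ih
    cases l with
    | nil => simp at h1
    | cons c' t =>
      simp only [List.head?_cons, Option.some.injEq] at h1
      subst h1
      exact ⟨_ :: c' :: t, rfl, by rw [List.getLast?_cons_cons]; exact h2,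
        List.isChain_cons_cons.mpr ⟨hac, h3⟩⟩

theorem diwalk_mem : ∀ {l : List V} {u v x : V}, DiWalk A u v l → x ∈ l →
    Relation.ReflTransGen A u x ∧ Relation.ReflTransGen A x v := by
  intro l
  induction l with
  | nil => intro u v x h hx; simp at hx
  | cons a t ih =>
    intro u v x h hx
    obtain ⟨h1, h2, h3⟩ := h
    simp only [List.head?_cons, Option.some.injEq] at h1
    subst h1
    cases t with
    | nil =>
      simp only [List.getLast?_singleton, Option.some.injEq] at h2
      subst h2
      simp only [List.mem_singleton] at hx
      subst hx; exact ⟨.refl, .refl⟩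
    | cons b t' =>
      have hab : A a b := (List.isChain_cons_cons.mp h3).1
      have hw : DiWalk A b v (b :: t') :=
        ⟨rfl, by rw [List.getLast?_cons_cons] at h2; exact h2, (List.isChain_cons_cons.mp h3).2⟩
      have hfull : Relation.ReflTransGen A a v := .head hab (diwalk_rtg hw)
      rcases List.mem_cons.mp hx with rfl | hx'
      · exact ⟨.refl, hfull⟩
      · obtain ⟨r1, r2⟩ := ih hw hx'
        exact ⟨.head hab r1, r2⟩

theorem mem_split_interior : ∀ {l : List V} {a b x : V}, l.head? = some a →
    l.getLast? = some b → x ∈ l → x ≠ a → x ≠ b →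
    ∃ l₁ p s l₂, l = l₁ ++ p :: x :: s :: l₂ := by
  intro l
  induction l with
  | nil => intro a b x h1 _ hx; simp at hx
  | cons y t ih =>
    intro a b x h1 h2 hx hxa hxb
    simp only [List.head?_cons, Option.some.injEq] at h1
    subst h1
    rcases List.mem_cons.mp hx with rfl | hx'
    · exact absurd rfl hxa
    cases t with
    | nil => simp at hx'
    | cons z t' =>
      rw [List.getLast?_cons_cons] at h2
      by_cases hxz : x = z
      · subst hxz
        cases t' with
        | nil =>
          simp only [List.getLast?_singleton, Option.some.injEq] at h2
          exact absurd h2 hxb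
        | cons s t'' => exact ⟨[], y, s, t'', rfl⟩
      · obtain ⟨l₁, p, s, l₂, heq⟩ := ih rfl h2 hx' hxz hxb
        exact ⟨y :: l₁, p, s, l₂, by rw [heq]; rfl⟩

theorem chain'_extract {l₁ l₂ : List V} {p x s : V}
    (h : List.Chain' A (l₁ ++ p :: x :: s :: l₂)) : A p x ∧ A x s := by
  have h2 := (List.isChain_append.mp h).2.1
  exact ⟨(List.isChain_cons_cons.mp h2).1, (List.isChain_cons_cons.mp (List.isChain_cons_cons.mp h2).2).1⟩

theorem shortcut {l₁ l₂ : List V} {a b p x s : V}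
    (h : DiWalk A a b (l₁ ++ p :: x :: s :: l₂)) (hps : A p s) :
    DiWalk A a b (l₁ ++ p :: s :: l₂) := by
  obtain ⟨h1, h2, h3⟩ := h
  obtain ⟨hc1, hc2, hc3⟩ := List.isChain_append.mp h3
  refine ⟨?_, ?_, List.isChain_append.mpr ⟨hc1, ?_, ?_⟩⟩
  · cases l₁ with
    | nil => exact h1
    | cons y t => exact h1
  · rw [List.getLast?_append_of_ne_nil _ (by simp)] at h2 ⊢
    rw [List.getLast?_cons_cons, List.getLast?_cons_cons] at h2
    rw [List.getLast?_cons_cons]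
    exact h2
  · exact List.isChain_cons_cons.mpr ⟨hps, (List.isChain_cons_cons.mp (List.isChain_cons_cons.mp hc2).2).2⟩
  · intro x hx y hy
    exact hc3 x hx y hy

theorem exists_geodesic {u v : V} (h : Relation.ReflTransGen A u v) :
    ∃ l, IsGeodesic A u v l := by
  obtain ⟨l0, hl0⟩ := rtg_diwalk h
  have hS : (Set.Nonempty {n | ∃ l, DiWalk A u v l ∧ l.length = n}) := ⟨l0.length, l0, hl0, rfl⟩
  obtain ⟨l, hl, hlen⟩ := Nat.sInf_mem hS
  refine ⟨l, hl, fun l' hl' => ?_⟩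
  rw [hlen]
  exact Nat.sInf_le ⟨l', hl', rfl⟩

theorem geodesic_interior {a b x : V} {l : List V}
    (hg : IsGeodesic A a b l) (hx : x ∈ l) (hxa : x ≠ a) (hxb : x ≠ b) :
    (∃ p s, A p x ∧ A x s ∧ ¬ A p s) ∧ Relation.ReflTransGen A a x ∧
      Relation.ReflTransGen A x b ∧ ¬ A a b ∧ a ≠ b := by
  obtain ⟨⟨h1, h2, h3⟩, hmin⟩ := hg
  obtain ⟨l₁, p, s, l₂, rfl⟩ := mem_split_interior h1 h2 hx hxa hxb
  obtain ⟨hpx, hxs⟩ := chain'_extract h3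
  have hps : ¬ A p s := by
    intro hps
    have := hmin _ (shortcut ⟨h1, h2, h3⟩ hps)
    simp only [List.length_append, List.length_cons] at this
    omega
  have hmem := diwalk_mem ⟨h1, h2, h3⟩ hx
  have hab : ¬ A a b := by
    intro hab
    have := hmin [a, b] ⟨rfl, by simp, List.isChain_cons_cons.mpr ⟨hab, by simp⟩⟩
    simp only [List.length_append, List.length_cons, List.length_nil] at this
    omega
  have hne : a ≠ b := by
    intro hab
    have := hmin [a] ⟨rfl, by simp [hab], List.isChain_singleton _⟩
    simp only [List.length_append, List.length_cons, List.length_nil] at this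
    omega
  exact ⟨⟨p, s, hpx, hxs, hps⟩, hmem.1, hmem.2, hab, hne⟩

theorem geodesic_self {v x : V} {l : List V} (hg : IsGeodesic A v v l) (hx : x ∈ l) : x = v := by
  have h1 : l.length ≤ 1 := hg.2 [v] ⟨rfl, by simp, List.isChain_singleton _⟩
  obtain ⟨h2, _, _⟩ := hg.1
  cases l with
  | nil => simp at hx
  | cons y t =>
    cases t with
    | nil =>
      simp only [List.head?_cons, Option.some.injEq] at h2
      simp only [List.mem_singleton] at hx
      rw [hx, h2]
    | cons z t' => simp at h1

theorem geoInterval_self {v : V} : geoInterval A v v = {v} := by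
  apply Set.eq_of_subset_of_subset
  · intro x hx
    rcases hx with hx | hx
    · rcases hx with hx | hx <;> simp_all
    · rcases hx with ⟨l, hg, hm⟩ | ⟨l, hg, hm⟩ <;> exact geodesic_self hg hm
  · intro x hx
    rcases hx with rfl
    exact Set.mem_union_left _ (Or.inl rfl)

theorem walk_three (hT : IsTournament A) {u v w : V} (h1 : A u w) (h2 : A w v) (h3 : ¬ A u v) :
    ∀ {l' : List V}, DiWalk A u v l' → 3 ≤ l'.length := by
  intro l' hl'
  obtain ⟨g1, g2, g3⟩ := hl'
  match l' with
  | [] => simp at g1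
  | [x] =>
    simp only [List.head?_cons, Option.some.injEq] at g1
    simp only [List.getLast?_singleton, Option.some.injEq] at g2
    subst g1; subst g2
    exact absurd h2 (hT.1 _ _ h1)
  | [x, y] =>
    simp only [List.head?_cons, Option.some.injEq] at g1
    have : y = v := by simpa using g2
    subst g1; subst this
    exact absurd (List.isChain_cons_cons.mp g3).1 h3
  | x :: y :: z :: t => simp

theorem p3s_subset_geo (hT : IsTournament A) (u v : V) :
    p3sInterval A u v ⊆ geoInterval A u v := by
  intro w hw
  rcases hw with hw | hw
  · exact Set.mem_union_left _ hw
  refine Set.mem_union_right _ ?_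
  rcases hw with ⟨h1, h2, h3⟩ | ⟨h1, h2, h3⟩
  · left
    refine ⟨[u, w, v], ⟨⟨rfl, by simp, List.isChain_cons_cons.mpr ⟨h1, List.isChain_cons_cons.mpr ⟨h2, by simp⟩⟩⟩,
      fun l' hl' => walk_three hT h1 h2 h3 hl'⟩, by simp⟩
  · right
    refine ⟨[v, w, u], ⟨⟨rfl, by simp, List.isChain_cons_cons.mpr ⟨h1, List.isChain_cons_cons.mpr ⟨h2, by simp⟩⟩⟩,
      fun l' hl' => walk_three hT h1 h2 h3 hl'⟩, by simp⟩


theorem reach_iff {u v : V} : Reach A u v ↔ Relation.ReflTransGen A u v :=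
  ⟨fun ⟨_, hl⟩ => diwalk_rtg hl, rtg_diwalk⟩

theorem subset_hull (I : V → V → Set V) (S : Set V) : S ⊆ convexHullD I S := by
  intro x hx
  rw [convexHullD, Set.mem_sInter]
  exact fun C hC => hC.2 hx

theorem hull_convex (I : V → V → Set V) (S : Set V) : IsConvexSet I (convexHullD I S) := by
  intro u hu v hv w hw
  rw [convexHullD, Set.mem_sInter] at *
  intro C hC
  exact hC.1 u (hu C hC) v (hv C hC) hw

theorem hull_min {I : V → V → Set V} {S D : Set V} (hD : IsConvexSet I D) (hS : S ⊆ D) :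
    convexHullD I S ⊆ D := fun _ hx => Set.mem_sInter.mp hx D ⟨hD, hS⟩

theorem hull_mono {I : V → V → Set V} {S T : Set V} (h : S ⊆ T) :
    convexHullD I S ⊆ convexHullD I T := by
  intro x hx
  rw [convexHullD, Set.mem_sInter] at *
  exact fun C hC => hx C ⟨hC.1, h.trans hC.2⟩

theorem hull_mono_I {I J : V → V → Set V} (h : ∀ u v, I u v ⊆ J u v) (S : Set V) :
    convexHullD I S ⊆ convexHullD J S := by
  intro x hx
  rw [convexHullD, Set.mem_sInter] at *
  intro C hC
  exact hx C ⟨fun u hu v hv w hw => hC.1 u hu v hv (h u v hw), hC.2⟩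

/-- Strong component (reflexive-transitive-closure form). -/
def SCc (A : V → V → Prop) (v : V) : Set V :=
  {u | Relation.ReflTransGen A u v ∧ Relation.ReflTransGen A v u}

theorem SC_eq (A : V → V → Prop) (v : V) :
    {u | Reach A u v ∧ Reach A v u} = SCc A v := by
  ext u; simp [SCc, reach_iff]

theorem mem_SCc_self (A : V → V → Prop) (v : V) : v ∈ SCc A v := ⟨.refl, .refl⟩

theorem SCc_eq_of_mem {A : V → V → Prop} {u v : V} (h : u ∈ SCc A v) : SCc A u = SCc A v := by
  ext w
  exact ⟨fun hw => ⟨hw.1.trans h.1, h.2.trans hw.2⟩, fun hw => ⟨hw.1.trans h.2, h.1.trans hw.2⟩⟩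

def relA (A : V → V → Prop) (C : Set V) (a b : V) : Prop := a ∈ C ∧ b ∈ C ∧ A a b

def StrongOn (A : V → V → Prop) (C : Set V) : Prop :=
  ∀ u ∈ C, ∀ v ∈ C, Relation.ReflTransGen (relA A C) u v

theorem rtg_relA_mono {C D : Set V} (h : C ⊆ D) {u v : V}
    (hr : Relation.ReflTransGen (relA A C) u v) : Relation.ReflTransGen (relA A D) u v :=
  Relation.ReflTransGen.mono (r := relA A C) (p := relA A D) (fun _ _ hab => ⟨h hab.1, h hab.2.1, hab.2.2⟩) _ _ hr

theorem rtg_relA_to_rtg {C : Set V} {u v : V}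
    (hr : Relation.ReflTransGen (relA A C) u v) : Relation.ReflTransGen A u v :=
  Relation.ReflTransGen.mono (r := relA A C) (p := A) (fun _ _ hab => hab.2.2) _ _ hr

theorem rtg_in_comp {w v : V} (hv : v ∈ SCc A w) :
    ∀ {u}, Relation.ReflTransGen A u v → u ∈ SCc A w →
      Relation.ReflTransGen (relA A (SCc A w)) u v := by
  intro u h
  induction h using Relation.ReflTransGen.head_induction_on with
  | refl => intro _; exact .refl
  | head hac hcv ih =>
    intro ha
    rename_i a c
    have hc : c ∈ SCc A w := ⟨hcv.trans hv.1, ha.2.tail hac⟩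
    exact .head ⟨ha, hc, hac⟩ (ih hc)

theorem comp_strongOn (A : V → V → Prop) (w : V) : StrongOn A (SCc A w) := by
  intro u hu v hv
  exact rtg_in_comp hv (hu.1.trans hv.2) hu

theorem no_return (hT : IsTournament A) {C : Set V} {x : V}
    (htr : ∀ p s, p ∈ C → s ∈ C → A p x → A x s → A p s) :
    ∀ {z}, Relation.ReflTransGen (relA A C) z x → A x z → False := by
  intro z h
  induction h using Relation.ReflTransGen.head_induction_on with
  | refl => intro hxx; exact hT.1 x x hxx hxx
  | head hab hbx ih =>
    intro hxa
    rename_i a b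
    obtain ⟨haC, hbC, hAab⟩ := hab
    by_cases hbxeq : b = x
    · rw [hbxeq] at hAab; exact hT.1 a x hAab hxa
    · by_cases hbx' : A x b
      · exact ih hbx'
      · rcases hT.2 b x hbxeq with h' | h'
        · exact hT.1 a b hAab (htr b a hbC haC h' hxa)
        · exact hbx' h'

theorem not_extreme_in_strong (hT : IsTournament A) {C : Set V} (hC : StrongOn A C) {x : V}
    (hx : x ∈ C) (h2 : ∃ y ∈ C, y ≠ x) :
    ∃ p s, p ∈ C ∧ s ∈ C ∧ A p x ∧ A x s ∧ ¬ A p s := by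
  by_contra h
  push_neg at h
  obtain ⟨y, hy, hyx⟩ := h2
  have hxy := hC x hx y hy
  have hyx' := hC y hy x hx
  rcases Relation.ReflTransGen.cases_head hxy with heq | ⟨z, hxz, hzy⟩
  · exact hyx heq.symm
  · exact no_return hT h (hzy.trans hyx') hxz.2.2

theorem triangle_of_strong (hT : IsTournament A) {C : Set V} (hC : StrongOn A C)
    (h2 : ∃ a ∈ C, ∃ b ∈ C, a ≠ b) :
    ∃ a b c, a ∈ C ∧ b ∈ C ∧ c ∈ C ∧ A a b ∧ A b c ∧ A c a := by
  obtain ⟨u0, hu0, v0, hv0, hne⟩ := h2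
  obtain ⟨u, v, hu, hv, hvu⟩ : ∃ u v, u ∈ C ∧ v ∈ C ∧ A v u := by
    rcases hT.2 u0 v0 hne with h | h
    exacts [⟨v0, u0, hv0, hu0, h⟩, ⟨u0, v0, hu0, hv0, h⟩]
  obtain ⟨l, hg⟩ := exists_geodesic (A := relA A C) (hC u hu v hv)
  obtain ⟨⟨h1, h2', h3⟩, hmin⟩ := hg
  match l, h1, h2', h3, hmin with
  | [], h1, h2', h3, hmin => simp at h1
  | [x], h1, h2', h3, hmin =>
    simp only [List.head?_cons, Option.some.injEq] at h1
    simp only [List.getLast?_singleton, Option.some.injEq] at h2'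
    have huv : u = v := h1.symm.trans h2'
    rw [huv] at hvu
    exact absurd hvu (fun h => hT.1 v v h h)
  | [x, y], h1, h2', h3, hmin =>
    simp only [List.head?_cons, Option.some.injEq] at h1
    have hy : y = v := by simpa using h2'
    have : relA A C x y := (List.isChain_cons_cons.mp h3).1
    rw [h1, hy] at this
    exact absurd this.2.2 (fun h => hT.1 v u hvu h)
  | x :: y :: z :: t, h1, h2', h3, hmin =>
    simp only [List.head?_cons, Option.some.injEq] at h1
    rw [h1] at h3 hmin
    have hxy : relA A C u y := (List.isChain_cons_cons.mp h3).1
    have hyz : relA A C y z := (List.isChain_cons_cons.mp (List.isChain_cons_cons.mp h3).2).1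
    rw [h1] at h2'
    have hnuz : ¬ relA A C u z := by
      intro huz
      have := hmin _ (shortcut (l₁ := []) (l₂ := t) ⟨rfl, h2', h3⟩ huz)
      simp only [List.nil_append, List.length_cons] at this
      omega
    have hne_uz : u ≠ z := by
      rintro rfl
      exact hT.1 u y hxy.2.2 hyz.2.2
    have hAzu : A z u := by
      rcases hT.2 u z hne_uz with h | h
      · exact absurd ⟨hu, hyz.2.1, h⟩ hnuz
      · exact h
    exact ⟨u, y, z, hu, hxy.2.1, hyz.2.1, hxy.2.2, hyz.2.2, hAzu⟩

theorem strongOn_insert {D : Set V} (hC : StrongOn A D) {x c c' : V} (hc : c ∈ D) (hc' : c' ∈ D)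
    (hcx : A c x) (hxc' : A x c') : StrongOn A (insert x D) := by
  have mono : ∀ {a b : V}, Relation.ReflTransGen (relA A D) a b →
      Relation.ReflTransGen (relA A (insert x D)) a b :=
    fun h => rtg_relA_mono (Set.subset_insert x D) h
  have hxin : x ∈ insert x D := Set.mem_insert x D
  have arc1 : relA A (insert x D) c x := ⟨Set.mem_insert_of_mem _ hc, hxin, hcx⟩
  have arc2 : relA A (insert x D) x c' := ⟨hxin, Set.mem_insert_of_mem _ hc', hxc'⟩
  intro u hu v hv
  rcases Set.mem_insert_iff.mp hu with rfl | hu' <;> rcases Set.mem_insert_iff.mp hv with rfl | hv'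
  · exact .refl
  · exact .head arc2 (mono (hC c' hc' v hv'))
  · exact (mono (hC u hu' c hc)).tail arc1
  · exact mono (hC u hu' v hv')

theorem strongOn_sandwich {E : Set V} {l w : V} (hne : E.Nonempty)
    (h1 : ∀ d ∈ E, A w d) (h2 : ∀ d ∈ E, A d l) (h3 : A l w) :
    StrongOn A (insert l (insert w E)) := by
  set C' := insert l (insert w E) with hC'
  have hl : l ∈ C' := Set.mem_insert _ _
  have hw : w ∈ C' := Set.mem_insert_of_mem _ (Set.mem_insert _ _)
  have hmem : ∀ d ∈ E, d ∈ C' := fun d hd => Set.mem_insert_of_mem _ (Set.mem_insert_of_mem _ hd)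
  have arc_lw : relA A C' l w := ⟨hl, hw, h3⟩
  have arc_wd : ∀ d ∈ E, relA A C' w d := fun d hd => ⟨hw, hmem d hd, h1 d hd⟩
  have arc_dl : ∀ d ∈ E, relA A C' d l := fun d hd => ⟨hmem d hd, hl, h2 d hd⟩
  obtain ⟨e, he⟩ := hne
  have rl : ∀ v ∈ E, Relation.ReflTransGen (relA A C') l v :=
    fun v hv => .head arc_lw (.head (arc_wd v hv) .refl)
  have rw' : ∀ v ∈ E, Relation.ReflTransGen (relA A C') w v :=
    fun v hv => .head (arc_wd v hv) .refl
  have rdw : ∀ u ∈ E, Relation.ReflTransGen (relA A C') u w :=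
    fun u hu => .head (arc_dl u hu) (.head arc_lw .refl)
  intro u hu v hv
  rcases Set.mem_insert_iff.mp hu with rfl | hu'
  · rcases Set.mem_insert_iff.mp hv with rfl | hv'
    · exact .refl
    rcases Set.mem_insert_iff.mp hv' with rfl | hv''
    · exact .head arc_lw .refl
    · exact rl v hv''
  rcases Set.mem_insert_iff.mp hu' with rfl | hu''
  · rcases Set.mem_insert_iff.mp hv with rfl | hv'
    · exact (rw' e he).trans (.head (arc_dl e he) .refl)
    rcases Set.mem_insert_iff.mp hv' with rfl | hv''
    · exact .refl
    · exact rw' v hv''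
  · rcases Set.mem_insert_iff.mp hv with rfl | hv'
    · exact .head (arc_dl u hu'') .refl
    rcases Set.mem_insert_iff.mp hv' with rfl | hv''
    · exact rdw u hu''
    · exact (rdw u hu'').trans (rw' v hv'')

theorem strongOn_triple {a b c : V} (h1 : A a b) (h2 : A b c) (h3 : A c a) :
    StrongOn A {a, b, c} := by
  have ha : a ∈ ({a, b, c} : Set V) := Or.inl rfl
  have hb : b ∈ ({a, b, c} : Set V) := Or.inr (Or.inl rfl)
  have hc : c ∈ ({a, b, c} : Set V) := Or.inr (Or.inr rfl)
  have r1 : relA A {a, b, c} a b := ⟨ha, hb, h1⟩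
  have r2 : relA A {a, b, c} b c := ⟨hb, hc, h2⟩
  have r3 : relA A {a, b, c} c a := ⟨hc, ha, h3⟩
  intro u hu v hv
  simp only [Set.mem_insert_iff, Set.mem_singleton_iff] at hu hv
  rcases hu with rfl | rfl | rfl <;> rcases hv with rfl | rfl | rfl
  · exact .refl
  · exact .head r1 .refl
  · exact .head r1 (.head r2 .refl)
  · exact .head r2 (.head r3 .refl)
  · exact .refl
  · exact .head r2 .refl
  · exact .head r3 .refl
  · exact .head r3 (.head r1 .refl)
  · exact .refl

theorem rtg_stay {C P : Set V} (hP : ∀ a ∈ P, ∀ b, relA A C a b → b ∈ P) :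
    ∀ {u v : V}, Relation.ReflTransGen (relA A C) u v → u ∈ P → v ∈ P := by
  intro u v h
  induction h using Relation.ReflTransGen.head_induction_on with
  | refl => exact id
  | head hab _ ih => exact fun ha => ih (hP _ ha _ hab)

end Aux

section Aux2
variable {V : Type*} [Finite V] {A : V → V → Prop}

theorem del_vertex (hT : IsTournament A) {C : Set V} (hC : StrongOn A C)
    (h4 : 4 ≤ C.ncard) : ∃ x ∈ C, StrongOn A (C \ {x}) := by
  classical
  have hfinC : C.Finite := Set.toFinite C
  obtain ⟨a, b, c, haC, hbC, hcC, hab, hbc, hca⟩ := triangle_of_strong hT hC (by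
    obtain ⟨u, v, hu, hv, huv⟩ := (Set.one_lt_ncard_iff (Set.toFinite C)).mp (by omega)
    exact ⟨u, hu, v, hv, huv⟩)
  have hab' : a ≠ b := fun h => hT.1 a b hab (h ▸ hab)
  have hbc' : b ≠ c := fun h => hT.1 b c hbc (h ▸ hbc)
  have hca' : c ≠ a := fun h => hT.1 c a hca (h ▸ hca)
  have htri_card : ({a, b, c} : Set V).ncard = 3 := by
    rw [Set.ncard_insert_of_notMem (by simp [hab', hca'.symm]), Set.ncard_insert_of_notMem
      (by simp [hbc']), Set.ncard_singleton]
  set 𝒮 : Set (Set V) := {D | D ⊆ C ∧ StrongOn A D ∧ 3 ≤ D.ncard ∧ D ≠ C} with h𝒮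
  have hsub3 : ({a, b, c} : Set V) ⊆ C := by
    intro x hx
    simp only [Set.mem_insert_iff, Set.mem_singleton_iff] at hx
    rcases hx with rfl | rfl | rfl <;> assumption
  have htri : ({a, b, c} : Set V) ∈ 𝒮 :=
    ⟨hsub3, strongOn_triple hab hbc hca, by rw [htri_card], fun h => by rw [← h] at h4; omega⟩
  obtain ⟨D, hD𝒮, hmax⟩ := Set.Finite.exists_maximalFor Set.ncard 𝒮 (Set.toFinite 𝒮) ⟨_, htri⟩
  obtain ⟨hDC, hDstrong, hD3, hDne⟩ := hD𝒮
  have hOut : (C \ D).Nonempty := by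
    rw [Set.diff_nonempty]
    exact fun h => hDne (Set.Subset.antisymm hDC h)
  have hDfin : D.Finite := Set.toFinite D
  by_cases hA : ∃ x ∈ C \ D, (∃ d ∈ D, A d x) ∧ (∃ d' ∈ D, A x d')
  · obtain ⟨x, hx, ⟨d, hd, hdx⟩, ⟨d', hd', hxd'⟩⟩ := hA
    have hxD : x ∉ D := hx.2
    have hstr : StrongOn A (insert x D) := strongOn_insert hDstrong hd hd' hdx hxd'
    have hcard : (insert x D).ncard = D.ncard + 1 := Set.ncard_insert_of_notMem hxD
    by_cases hD' : insert x D = C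
    · refine ⟨x, hx.1, ?_⟩
      have : C \ {x} = D := by
        rw [← hD']
        ext y
        simp only [Set.mem_diff, Set.mem_insert_iff, Set.mem_singleton_iff]
        constructor
        · rintro ⟨rfl | hy, hyx⟩
          · exact absurd rfl hyx
          · exact hy
        · exact fun hy => ⟨Or.inr hy, fun h => hxD (h ▸ hy)⟩
      rw [this]
      exact hDstrong
    · have : insert x D ∈ 𝒮 := ⟨Set.insert_subset hx.1 hDC, hstr, by omega, hD'⟩
      have := hmax this (by omega)
      omega
  · push_neg at hA
    have hsplit : ∀ x ∈ C \ D, (∀ d ∈ D, A x d) ∨ (∀ d ∈ D, A d x) := by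
      intro x hx
      by_cases hin : ∃ d ∈ D, A d x
      · right
        intro d hd
        by_cases h : A d x
        · exact h
        · have hxd : A x d := (hT.2 x d (fun he => hx.2 (he ▸ hd))).resolve_right h
          exact absurd hxd (hA x hx hin d hd)
      · left
        intro d hd
        rcases hT.2 x d (fun he => hx.2 (he ▸ hd)) with h | h
        · exact h
        · exact absurd ⟨d, hd, h⟩ hin
    obtain ⟨d₀, hd₀⟩ : D.Nonempty := Set.nonempty_of_ncard_ne_zero (by omega)
    set Dom : Set V := {x | x ∈ C \ D ∧ ∀ d ∈ D, A x d} with hDom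
    set Ld : Set V := {x | x ∈ C \ D ∧ ∀ d ∈ D, A d x} with hLd
    have hcover : ∀ x ∈ C \ D, x ∈ Dom ∨ x ∈ Ld := by
      intro x hx
      rcases hsplit x hx with h | h
      · exact Or.inl ⟨hx, h⟩
      · exact Or.inr ⟨hx, h⟩
    have hdisj : ∀ x, x ∈ Dom → x ∈ Ld → False := by
      intro x h1 h2
      exact hT.1 x d₀ (h1.2 d₀ hd₀) (h2.2 d₀ hd₀)
    -- Dom nonempty
    have hDomne : Dom.Nonempty := by
      by_contra h
      rw [Set.not_nonempty_iff_eq_empty] at h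
      obtain ⟨o, ho⟩ := hOut
      have hoLd : o ∈ Ld := by
        rcases hcover o ho with h' | h'
        · rw [h] at h'; exact absurd h' (Set.notMem_empty o)
        · exact h'
      have hstay : ∀ a ∈ Ld, ∀ b, relA A C a b → b ∈ Ld := by
        intro a ha b harc
        have hbD : b ∉ D := fun hbD => hT.1 a b harc.2.2 (ha.2 b hbD)
        rcases hcover b ⟨harc.2.1, hbD⟩ with h' | h'
        · rw [h] at h'; exact absurd h' (Set.notMem_empty b)
        · exact h'
      have := rtg_stay hstay (hC o ho.1 d₀ (hDC hd₀)) hoLd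
      exact this.1.2 hd₀
    have hLdne : Ld.Nonempty := by
      by_contra h
      rw [Set.not_nonempty_iff_eq_empty] at h
      obtain ⟨o, ho⟩ := hOut
      have hstay : ∀ a ∈ D, ∀ b, relA A C a b → b ∈ D := by
        intro a ha b harc
        by_cases hbD : b ∈ D
        · exact hbD
        · rcases hcover b ⟨harc.2.1, hbD⟩ with h' | h'
          · exact absurd harc.2.2 (fun h'' => hT.1 b a (h'.2 a ha) h'')
          · rw [h] at h'; exact absurd h' (Set.notMem_empty b)
      have := rtg_stay hstay (hC d₀ (hDC hd₀) o ho.1) hd₀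
      exact ho.2 this
    have harcLW : ∃ l ∈ Ld, ∃ w ∈ Dom, A l w := by
      by_contra h
      push_neg at h
      have hstay : ∀ a ∈ D ∪ Ld, ∀ b, relA A C a b → b ∈ D ∪ Ld := by
        intro a ha b harc
        by_cases hbD : b ∈ D
        · exact Or.inl hbD
        rcases hcover b ⟨harc.2.1, hbD⟩ with h' | h'
        · rcases ha with ha | ha
          · exact absurd harc.2.2 (fun h'' => hT.1 b a (h'.2 a ha) h'')
          · exact absurd harc.2.2 (h a ha b h')
        · exact Or.inr h'
      obtain ⟨w, hw⟩ := hDomne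
      have := rtg_stay hstay (hC d₀ (hDC hd₀) w hw.1.1) (Or.inl hd₀)
      rcases this with h' | h'
      · exact hw.1.2 h'
      · exact hdisj w hw h'
    obtain ⟨l, hl, w, hw, hlw⟩ := harcLW
    have hlD : l ∉ D := hl.1.2
    have hwD : w ∉ D := hw.1.2
    have hlw' : l ≠ w := fun h => hdisj l (h ▸ hw) hl
    have hstr : StrongOn A (insert l (insert w D)) :=
      strongOn_sandwich ⟨d₀, hd₀⟩ hw.2 hl.2 hlw
    have hlwD : l ∉ insert w D := by simp [hlw', hlD]
    have hcard2 : (insert l (insert w D)).ncard = D.ncard + 2 := by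
      rw [Set.ncard_insert_of_notMem hlwD, Set.ncard_insert_of_notMem hwD]
    by_cases hD' : insert l (insert w D) = C
    · refine ⟨d₀, hDC hd₀, ?_⟩
      obtain ⟨e, he, hed₀⟩ := Set.exists_ne_of_one_lt_ncard (s := D) (by omega) d₀
      have hd₀l : d₀ ≠ l := fun h => hlD (h ▸ hd₀)
      have hd₀w : d₀ ≠ w := fun h => hwD (h ▸ hd₀)
      have hset : C \ {d₀} = insert l (insert w (D \ {d₀})) := by
        rw [← hD']
        ext y
        simp only [Set.mem_diff, Set.mem_insert_iff, Set.mem_singleton_iff]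
        constructor
        · rintro ⟨rfl | (rfl | hy), hyd⟩
          · exact Or.inl rfl
          · exact Or.inr (Or.inl rfl)
          · exact Or.inr (Or.inr ⟨hy, hyd⟩)
        · rintro (rfl | rfl | ⟨hy, hyd⟩)
          · exact ⟨Or.inl rfl, hd₀l.symm⟩
          · exact ⟨Or.inr (Or.inl rfl), hd₀w.symm⟩
          · exact ⟨Or.inr (Or.inr hy), hyd⟩
      rw [hset]
      exact strongOn_sandwich ⟨e, he, hed₀⟩ (fun d hd => hw.2 d hd.1)
        (fun d hd => hl.2 d hd.1) hlw
    · have hmem𝒮 : insert l (insert w D) ∈ 𝒮 :=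
        ⟨Set.insert_subset hl.1.1 (Set.insert_subset hw.1.1 hDC), hstr, by omega, hD'⟩
      have := hmax hmem𝒮 (by omega)
      omega

theorem convex_of_mid {W : Type*} {R Q : W → W → Prop} {D : Set W}
    (hmid : ∀ u v w, Q u w → Q w v → ¬ Q u v → R u w ∧ R w v ∧ ¬ R u v)
    (hD : IsConvexSet (p3sInterval R) D) : IsConvexSet (p3sInterval Q) D := by
  intro u hu v hv w hw
  simp only [p3sInterval, Set.mem_union, Set.mem_insert_iff, Set.mem_singleton_iff,
    Set.mem_setOf_eq] at hw
  rcases hw with (rfl | rfl) | hw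
  · exact hu
  · exact hv
  rcases hw with ⟨h1, h2, h3⟩ | ⟨h1, h2, h3⟩
  · obtain ⟨r1, r2, r3⟩ := hmid u v w h1 h2 h3
    exact hD u hu v hv (Set.mem_union_right _ (Or.inl ⟨r1, r2, r3⟩))
  · obtain ⟨r1, r2, r3⟩ := hmid v u w h1 h2 h3
    exact hD u hu v hv (Set.mem_union_right _ (Or.inr ⟨r1, r2, r3⟩))

theorem hull_of_rel {W : Type*} {R Q : W → W → Prop}
    (hmid : ∀ u v w, Q u w → Q w v → ¬ Q u v → R u w ∧ R w v ∧ ¬ R u v) (S : Set W) :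
    convexHullD (p3sInterval Q) S ⊆ convexHullD (p3sInterval R) S :=
  hull_min (convex_of_mid hmid (hull_convex _ _)) (subset_hull _ _)

theorem mid_relA_mono {C' C : Set V} (hsub : C' ⊆ C) :
    ∀ u v w, relA A C' u w → relA A C' w v → ¬ relA A C' u v →
      relA A C u w ∧ relA A C w v ∧ ¬ relA A C u v := by
  intro u v w h1 h2 h3
  refine ⟨⟨hsub h1.1, hsub h1.2.1, h1.2.2⟩, ⟨hsub h2.1, hsub h2.2.1, h2.2.2⟩, ?_⟩
  exact fun h => h3 ⟨h1.1, h2.2.1, h.2.2⟩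

theorem mid_relA_global (C : Set V) :
    ∀ u v w, relA A C u w → relA A C w v → ¬ relA A C u v →
      A u w ∧ A w v ∧ ¬ A u v := by
  intro u v w h1 h2 h3
  exact ⟨h1.2.2, h2.2.2, fun h => h3 ⟨h1.1, h2.2.1, h⟩⟩

theorem strong_pair (hT : IsTournament A) : ∀ (n : ℕ) (C : Set V), C.ncard ≤ n →
    StrongOn A C → 2 ≤ C.ncard →
    ∃ a b, a ∈ C ∧ b ∈ C ∧ a ≠ b ∧ C ⊆ convexHullD (p3sInterval (relA A C)) {a, b} := by
  intro n
  induction n with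
  | zero => intro C h0 _ h2; omega
  | succ n ih =>
    intro C hle hC h2
    by_cases h3 : C.ncard ≤ 3
    · obtain ⟨a, b, c, haC, hbC, hcC, hab, hbc, hca⟩ := triangle_of_strong hT hC (by
        obtain ⟨u, v, hu, hv, huv⟩ := (Set.one_lt_ncard_iff (Set.toFinite C)).mp (by omega)
        exact ⟨u, hu, v, hv, huv⟩)
      have hab' : a ≠ b := fun h => hT.1 a b hab (h ▸ hab)
      have hbc' : b ≠ c := fun h => hT.1 b c hbc (h ▸ hbc)
      have hca' : c ≠ a := fun h => hT.1 c a hca (h ▸ hca)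
      have htri_card : ({a, b, c} : Set V).ncard = 3 := by
        rw [Set.ncard_insert_of_notMem (by simp [hab', hca'.symm]),
          Set.ncard_insert_of_notMem (by simp [hbc']), Set.ncard_singleton]
      have hCeq : ({a, b, c} : Set V) = C := by
        apply Set.eq_of_subset_of_ncard_le
        · intro x hx
          simp only [Set.mem_insert_iff, Set.mem_singleton_iff] at hx
          rcases hx with rfl | rfl | rfl <;> assumption
        · omega
        · exact Set.toFinite C
      set H := convexHullD (p3sInterval (relA A C)) {a, b} with hH
      have haH : a ∈ H := subset_hull _ _ (Or.inl rfl)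
      have hbH : b ∈ H := subset_hull _ _ (Or.inr rfl)
      have hcH : c ∈ H := by
        apply hull_convex _ _ a haH b hbH
        exact Set.mem_union_right _ (Or.inr ⟨⟨hbC, hcC, hbc⟩, ⟨hcC, haC, hca⟩,
          fun h => hT.1 a b hab h.2.2⟩)
      refine ⟨a, b, haC, hbC, hab', ?_⟩
      intro x hx
      rw [← hCeq] at hx
      simp only [Set.mem_insert_iff, Set.mem_singleton_iff] at hx
      rcases hx with rfl | rfl | rfl <;> assumption
    · obtain ⟨x, hxC, hstr'⟩ := del_vertex hT hC (by omega)
      have hcard' : (C \ {x}).ncard = C.ncard - 1 := Set.ncard_diff_singleton_of_mem hxC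
      obtain ⟨a, b, haC', hbC', hab', hsub'⟩ := ih (C \ {x}) (by omega) hstr' (by omega)
      set H := convexHullD (p3sInterval (relA A C)) {a, b} with hH
      have hC'H : C \ {x} ⊆ H := by
        refine hsub'.trans ?_
        exact hull_of_rel (mid_relA_mono Set.diff_subset) _
      obtain ⟨p, s', hpC, hsC, hpx, hxs, hps⟩ := not_extreme_in_strong hT hC hxC (by
        obtain ⟨y, hy, hyx⟩ := Set.exists_ne_of_one_lt_ncard (s := C) (by omega) x
        exact ⟨y, hy, hyx⟩)
      have hpne : p ≠ x := by rintro rfl; exact hT.1 p p hpx hpx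
      have hsne : s' ≠ x := by rintro rfl; exact hT.1 s' s' hxs hxs
      have hpH : p ∈ H := hC'H ⟨hpC, hpne⟩
      have hsH : s' ∈ H := hC'H ⟨hsC, hsne⟩
      have hxH : x ∈ H := by
        apply hull_convex _ _ p hpH s' hsH
        exact Set.mem_union_right _ (Or.inl ⟨⟨hpC, hxC, hpx⟩, ⟨hxC, hsC, hxs⟩,
          fun h => hps h.2.2⟩)
      refine ⟨a, b, (Set.diff_subset) haC', (Set.diff_subset) hbC', hab', ?_⟩
      intro y hy
      by_cases hyx : y = x
      · exact hyx ▸ hxH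
      · exact hC'H ⟨hy, hyx⟩


/-- The extremality predicate from the theorem statement. -/
def ExtP (A : V → V → Prop) (v : V) : Prop :=
  (∀ u, ¬ A u v) ∨ (∀ u, ¬ A v u) ∨ (∀ u w, A u v → A v w → A u w)

theorem ext_iff_trivial (hT : IsTournament A) (v : V) :
    ExtP A v ↔ SCc A v = {v} := by
  constructor
  · intro hv
    by_contra hne
    have hvv : v ∈ SCc A v := mem_SCc_self A v
    obtain ⟨u, hu, huv⟩ : ∃ u ∈ SCc A v, u ≠ v := by
      by_contra h
      push_neg at h
      exact hne (Set.eq_singleton_iff_unique_mem.mpr ⟨hvv, h⟩)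
    rcases hv with hv | hv | hv
    · rcases Relation.ReflTransGen.cases_tail hu.1 with heq | ⟨w, _, hwv⟩
      · exact huv heq.symm
      · exact hv w hwv
    · rcases Relation.ReflTransGen.cases_head hu.2 with heq | ⟨w, hvw, _⟩
      · exact huv heq.symm
      · exact hv w hvw
    · obtain ⟨p, s', _, _, hpv, hvs, hps⟩ :=
        not_extreme_in_strong hT (comp_strongOn A v) hvv ⟨u, hu, huv⟩
      exact hps (hv p s' hpv hvs)
  · intro hv
    refine Or.inr (Or.inr ?_)
    intro u w huv hvw
    by_contra hnw
    have hneq : u ≠ w := by rintro rfl; exact hT.1 u v huv (hvw)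
    have hwu : A w u := (hT.2 u w hneq).resolve_left hnw
    have hwv : w ∈ SCc A v :=
      ⟨Relation.ReflTransGen.head hwu (Relation.ReflTransGen.single huv),
        Relation.ReflTransGen.single hvw⟩
    rw [hv] at hwv
    rw [Set.mem_singleton_iff] at hwv
    rw [hwv] at hvw
    exact hT.1 v v hvw hvw

theorem geo_mem_cases {u w x : V} (hx : x ∈ geoInterval A u w) (hxu : x ≠ u) (hxw : x ≠ w) :
    (∃ p s, A p x ∧ A x s ∧ ¬ A p s) ∧
    (∃ a b, ({a, b} : Set V) = {u, w} ∧ Relation.ReflTransGen A a x ∧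
      Relation.ReflTransGen A x b ∧ ¬ A a b ∧ a ≠ b) := by
  rcases hx with hx | hx
  · rcases hx with rfl | rfl
    · exact absurd rfl hxu
    · exact absurd rfl hxw
  rcases hx with ⟨l, hg, hm⟩ | ⟨l, hg, hm⟩
  · obtain ⟨h1, h2, h3, h4, h5⟩ := geodesic_interior hg hm hxu hxw
    exact ⟨h1, u, w, rfl, h2, h3, h4, h5⟩
  · obtain ⟨h1, h2, h3, h4, h5⟩ := geodesic_interior hg hm hxw hxu
    exact ⟨h1, w, u, by rw [Set.pair_comm], h2, h3, h4, h5⟩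

theorem compl_extreme_convex (hT : IsTournament A) {v : V} (hv : ExtP A v) :
    IsConvexSet (geoInterval A) {w | w ≠ v} := by
  intro u hu w hw x hx
  simp only [Set.mem_setOf_eq] at *
  rintro rfl
  obtain ⟨⟨p, s', hpx, hxs, hps⟩, _⟩ := geo_mem_cases hx (Ne.symm hu) (Ne.symm hw)
  rcases hv with hv | hv | hv
  · exact hv p hpx
  · exact hv s' hxs
  · exact hps (hv p s' hpx hxs)

theorem geo_mem_comp (hT : IsTournament A) {u w x : V} (hx : x ∈ geoInterval A u w)
    (hxu : x ≠ u) (hxw : x ≠ w) : u ∈ SCc A x ∧ w ∈ SCc A x := by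
  obtain ⟨_, a, b, hab, h1, h2, h3, h4⟩ := geo_mem_cases hx hxu hxw
  have hba : A b a := (hT.2 a b h4).resolve_left h3
  have haS : a ∈ SCc A x := ⟨h1, h2.trans (Relation.ReflTransGen.single hba)⟩
  have hbS : b ∈ SCc A x := ⟨(Relation.ReflTransGen.single hba).trans h1, h2⟩
  have hu' : u ∈ ({a, b} : Set V) := by rw [hab]; exact Or.inl rfl
  have hw' : w ∈ ({a, b} : Set V) := by rw [hab]; exact Or.inr rfl
  constructor
  · rcases hu' with rfl | rfl
    exacts [haS, hbS]
  · rcases hw' with rfl | rfl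
    exacts [haS, hbS]


theorem comp_eq_SCc {C : Set V} (hC : IsStrongComponent A C) {a : V} (ha : a ∈ C) :
    C = SCc A a := by
  obtain ⟨v, rfl⟩ := hC
  rw [SC_eq] at ha ⊢
  exact (SCc_eq_of_mem ha).symm

theorem comps_disjoint {C D : Set V} (hC : IsStrongComponent A C) (hD : IsStrongComponent A D)
    (hne : C ≠ D) : Disjoint C D :=
  Set.disjoint_left.mpr fun a haC haD =>
    hne ((comp_eq_SCc hC haC).trans (comp_eq_SCc hD haD).symm)

theorem ext_disj_comp (hT : IsTournament A) {C : Set V} (hC : IsStrongComponent A C)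
    (h2 : 1 < C.ncard) : ∀ a, ExtP A a → a ∉ C := by
  intro a ha haC
  have h1 : SCc A a = {a} := (ext_iff_trivial hT a).mp ha
  have : C = {a} := (comp_eq_SCc hC haC).trans h1
  rw [this, Set.ncard_singleton] at h2
  omega

theorem two_le_counting {α : Type*} [Finite α] {ι : Type*} (F : Finset ι) (f : ι → Set α) :
    ∀ T : Set α, (∀ i ∈ F, f i ⊆ T) →
      (∀ i ∈ F, ∀ j ∈ F, i ≠ j → Disjoint (f i) (f j)) →
      (∀ i ∈ F, 2 ≤ (f i).ncard) → 2 * F.card ≤ T.ncard := by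
  classical
  induction F using Finset.induction_on with
  | empty => intro T _ _ _; simp
  | @insert i F' hiF ih =>
    intro T hs hd h2
    have hfT : f i ⊆ T := hs i (Finset.mem_insert_self i F')
    have hsub : ∀ j ∈ F', f j ⊆ T \ f i := by
      intro j hj
      rw [Set.subset_diff]
      refine ⟨hs j (Finset.mem_insert_of_mem hj), ?_⟩
      exact hd j (Finset.mem_insert_of_mem hj) i (Finset.mem_insert_self i F')
        (fun h => hiF (h ▸ hj))
    have hrec := ih (T \ f i) hsub
      (fun j hj k hk hjk => hd j (Finset.mem_insert_of_mem hj) k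
        (Finset.mem_insert_of_mem hk) hjk)
      (fun j hj => h2 j (Finset.mem_insert_of_mem hj))
    have heq : (T \ f i).ncard + (f i).ncard = T.ncard :=
      Set.ncard_diff_add_ncard_of_subset hfT
    have h2i := h2 i (Finset.mem_insert_self i F')
    rw [Finset.card_insert_of_notMem hiF]
    omega

theorem count_pairs {α : Type*} [Finite α] {ι : Type*} (F : Finset ι) (f : ι → Set α) :
    (∀ i ∈ F, ∀ j ∈ F, i ≠ j → Disjoint (f i) (f j)) →
    (∀ i ∈ F, (f i).ncard = 2) → (⋃ i ∈ F, f i).ncard = 2 * F.card := by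
  classical
  induction F using Finset.induction_on with
  | empty => intro _ _; simp
  | @insert i F' hiF ih =>
    intro hd h2
    rw [Finset.set_biUnion_insert]
    have hdis : Disjoint (f i) (⋃ j ∈ F', f j) := by
      rw [Set.disjoint_left]
      intro a hai haU
      simp only [Set.mem_iUnion] at haU
      obtain ⟨j, hj, haj⟩ := haU
      exact Set.disjoint_left.mp (hd i (Finset.mem_insert_self i F') j
        (Finset.mem_insert_of_mem hj) (fun h => hiF (h ▸ hj))) hai haj
    rw [Set.ncard_union_eq hdis, Finset.card_insert_of_notMem hiF,
      h2 i (Finset.mem_insert_self i F'),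
      ih (fun j hj k hk hjk => hd j (Finset.mem_insert_of_mem hj) k
        (Finset.mem_insert_of_mem hk) hjk) (fun j hj => h2 j (Finset.mem_insert_of_mem hj))]
    ring

theorem lower_bound (hT : IsTournament A) {S : Set V}
    (hS : IsHullSet (geoInterval A) S) :
    {v | ExtP A v}.ncard +
      2 * {C : Set V | IsStrongComponent A C ∧ 1 < C.ncard}.ncard ≤ S.ncard := by
  classical
  set Ext := {v | ExtP A v} with hE
  set 𝒞 := {C : Set V | IsStrongComponent A C ∧ 1 < C.ncard} with h𝒞
  have hhull : ∀ D : Set V, IsConvexSet (geoInterval A) D → S ⊆ D → ∀ x, x ∈ D := by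
    intro D hconv hsub x
    have h := hull_min hconv hsub
    rw [hS] at h
    exact h (Set.mem_univ x)
  have hExtS : Ext ⊆ S := by
    intro v hv
    by_contra hvS
    exact hhull {w | w ≠ v} (compl_extreme_convex hT hv)
      (fun w hw heq => hvS (heq ▸ hw)) v rfl
  have hcomp2 : ∀ C ∈ 𝒞, ∃ a b, a ∈ S ∩ C ∧ b ∈ S ∩ C ∧ a ≠ b := by
    intro C hC
    by_contra hno
    push_neg at hno
    set D := Cᶜ ∪ (S ∩ C) with hD
    have hconv : IsConvexSet (geoInterval A) D := by
      intro u hu w hw x hx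
      by_cases hxu : x = u
      · exact hxu ▸ hu
      by_cases hxw : x = w
      · exact hxw ▸ hw
      by_cases hxC : x ∈ C
      · have hcx := geo_mem_comp hT hx hxu hxw
        have hCx : C = SCc A x := comp_eq_SCc hC.1 hxC
        have huC : u ∈ C := hCx ▸ hcx.1
        have hwC : w ∈ C := hCx ▸ hcx.2
        have huSC : u ∈ S ∩ C := by
          rcases hu with h | h
          · exact absurd huC h
          · exact h
        have hwSC : w ∈ S ∩ C := by
          rcases hw with h | h
          · exact absurd hwC h
          · exact h
        have huw : u = w := hno u w huSC hwSC
        rw [← huw, geoInterval_self] at hx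
        exact absurd hx hxu
      · exact Or.inl hxC
    have hSD : S ⊆ D := by
      intro y hy
      by_cases hyC : y ∈ C
      · exact Or.inr ⟨hy, hyC⟩
      · exact Or.inl hyC
    obtain ⟨x₀, hx₀C, hx₀n⟩ : ∃ x ∈ C, x ∉ S ∩ C := by
      by_contra h
      push_neg at h
      obtain ⟨a, b, haC, hbC, hab⟩ := (Set.one_lt_ncard_iff (Set.toFinite C)).mp hC.2
      exact hab (hno a b (h a haC) (h b hbC))
    rcases hhull D hconv hSD x₀ with h | h
    · exact h hx₀C
    · exact hx₀n h
  have hfin𝒞 : 𝒞.Finite := Set.toFinite 𝒞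
  have hcount : 2 * hfin𝒞.toFinset.card ≤ (S \ Ext).ncard := by
    apply two_le_counting hfin𝒞.toFinset (fun C => S ∩ C) (S \ Ext)
    · intro C hC
      rw [Set.Finite.mem_toFinset] at hC
      intro a ha
      exact ⟨ha.1, fun haE => ext_disj_comp hT hC.1 hC.2 a haE ha.2⟩
    · intro C hC D hD hne
      rw [Set.Finite.mem_toFinset] at hC hD
      exact Set.disjoint_left.mpr fun a haC haD =>
        Set.disjoint_left.mp (comps_disjoint hC.1 hD.1 hne) haC.2 haD.2
    · intro C hC
      rw [Set.Finite.mem_toFinset] at hC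
      obtain ⟨a, b, ha, hb, hab⟩ := hcomp2 C hC
      exact (Set.one_lt_ncard_iff (Set.toFinite _)).mpr ⟨a, b, ha, hb, hab⟩
  have heq : (S \ Ext).ncard + Ext.ncard = S.ncard :=
    Set.ncard_diff_add_ncard_of_subset hExtS
  rw [Set.ncard_eq_toFinset_card 𝒞 hfin𝒞]
  omega

theorem upper_bound (hT : IsTournament A) :
    ∃ S : Set V, IsHullSet (p3sInterval A) S ∧
      S.ncard = {v | ExtP A v}.ncard +
        2 * {C : Set V | IsStrongComponent A C ∧ 1 < C.ncard}.ncard := by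
  classical
  set Ext := {v | ExtP A v} with hE
  set 𝒞 := {C : Set V | IsStrongComponent A C ∧ 1 < C.ncard} with h𝒞
  have hfin𝒞 : 𝒞.Finite := Set.toFinite 𝒞
  have hpair : ∀ C ∈ 𝒞, ∃ p : V × V, p.1 ∈ C ∧ p.2 ∈ C ∧ p.1 ≠ p.2 ∧
      C ⊆ convexHullD (p3sInterval A) {p.1, p.2} := by
    intro C hC
    have hstrong : StrongOn A C := by
      obtain ⟨v, rfl⟩ := hC.1
      rw [SC_eq]
      exact comp_strongOn A v
    obtain ⟨a, b, ha, hb, hab, hsub⟩ := strong_pair hT C.ncard C le_rfl hstrong hC.2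
    exact ⟨(a, b), ha, hb, hab, hsub.trans (hull_of_rel (mid_relA_global C) _)⟩
  set pair : Set V → Set V :=
    fun C => if h : C ∈ 𝒞 then {(hpair C h).choose.1, (hpair C h).choose.2} else ∅ with hpairdef
  have hpair_sub : ∀ C ∈ 𝒞, pair C ⊆ C := by
    intro C hC x hx
    rw [hpairdef] at hx
    simp only [dif_pos hC] at hx
    rcases hx with rfl | rfl
    exacts [(hpair C hC).choose_spec.1, (hpair C hC).choose_spec.2.1]
  have hpair_card : ∀ C ∈ 𝒞, (pair C).ncard = 2 := by
    intro C hC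
    rw [hpairdef]
    simp only [dif_pos hC]
    exact Set.ncard_pair (hpair C hC).choose_spec.2.2.1
  have hpair_hull : ∀ C ∈ 𝒞, C ⊆ convexHullD (p3sInterval A) (pair C) := by
    intro C hC
    rw [hpairdef]
    simp only [dif_pos hC]
    exact (hpair C hC).choose_spec.2.2.2
  set S := Ext ∪ ⋃ C ∈ hfin𝒞.toFinset, pair C with hSdef
  have hpairS : ∀ C ∈ 𝒞, pair C ⊆ S := by
    intro C hC x hx
    refine Or.inr ?_
    simp only [Set.mem_iUnion]
    exact ⟨C, hfin𝒞.mem_toFinset.mpr hC, hx⟩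
  refine ⟨S, ?_, ?_⟩
  · rw [IsHullSet, Set.eq_univ_iff_forall]
    intro x
    by_cases hx : SCc A x = {x}
    · exact subset_hull _ _ (Or.inl ((ext_iff_trivial hT x).mpr hx))
    · have hx2 : 1 < (SCc A x).ncard := by
        obtain ⟨y, hy, hyx⟩ : ∃ y ∈ SCc A x, y ≠ x := by
          by_contra h
          push_neg at h
          exact hx (Set.eq_singleton_iff_unique_mem.mpr ⟨mem_SCc_self A x, h⟩)
        exact (Set.one_lt_ncard_iff (Set.toFinite _)).mpr ⟨y, x, hy, mem_SCc_self A x, hyx⟩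
      have hCx : SCc A x ∈ 𝒞 := ⟨⟨x, (SC_eq A x).symm⟩, hx2⟩
      exact hull_mono (hpairS _ hCx) (hpair_hull _ hCx (mem_SCc_self A x))
  · have hExtdisj : Disjoint Ext (⋃ C ∈ hfin𝒞.toFinset, pair C) := by
      rw [Set.disjoint_left]
      intro a haE haU
      simp only [Set.mem_iUnion] at haU
      obtain ⟨C, hC, haC⟩ := haU
      rw [Set.Finite.mem_toFinset] at hC
      exact ext_disj_comp hT hC.1 hC.2 a haE (hpair_sub C hC haC)
    rw [hSdef, Set.ncard_union_eq hExtdisj,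
      count_pairs hfin𝒞.toFinset pair ?hd ?h2, Set.ncard_eq_toFinset_card 𝒞 hfin𝒞]
    case hd =>
      intro C hC D hD hne
      rw [Set.Finite.mem_toFinset] at hC hD
      exact Set.disjoint_of_subset (hpair_sub C hC) (hpair_sub D hD)
        (comps_disjoint hC.1 hD.1 hne)
    case h2 =>
      intro C hC
      rw [Set.Finite.mem_toFinset] at hC
      exact hpair_card C hC

end Aux2



/-- For a tournament `T` with exactly `ℓ` non-trivial strong
components and extreme-vertex set `Ext(T)`,
`hn_{P3*}(T) = hn_g(T) = |Ext(T)| + 2ℓ`. -/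
theorem stmt_10 {V : Type*} [Finite V] (A : V → V → Prop) (hT : IsTournament A)
    (Ext : Set V)
    (hExt : Ext = {v : V | (∀ u, ¬ A u v) ∨ (∀ u, ¬ A v u) ∨
                    (∀ u w, A u v → A v w → A u w)})
    (l : ℕ)
    (hl : l = {C : Set V | IsStrongComponent A C ∧ 1 < C.ncard}.ncard) :
    hullNumber (p3sInterval A) = Ext.ncard + 2 * l ∧
    hullNumber (geoInterval A) = Ext.ncard + 2 * l := by
  classical
  subst hExt
  subst hl
  obtain ⟨S₀, hS₀hull, hS₀card⟩ := upper_bound hT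
  have hgeo_of_p3s : ∀ S : Set V, IsHullSet (p3sInterval A) S → IsHullSet (geoInterval A) S := by
    intro S hS
    apply Set.eq_univ_of_univ_subset
    rw [← hS]
    exact hull_mono_I (fun u v => p3s_subset_geo hT u v) S
  have hS₀geo := hgeo_of_p3s S₀ hS₀hull
  have hmem_p3s : S₀.ncard ∈ {k | ∃ S : Set V, IsHullSet (p3sInterval A) S ∧ S.ncard = k} :=
    ⟨S₀, hS₀hull, rfl⟩
  have hmem_geo : S₀.ncard ∈ {k | ∃ S : Set V, IsHullSet (geoInterval A) S ∧ S.ncard = k} :=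
    ⟨S₀, hS₀geo, rfl⟩
  have hb : S₀.ncard = {v : V | (∀ u, ¬ A u v) ∨ (∀ u, ¬ A v u) ∨
      (∀ u w, A u v → A v w → A u w)}.ncard +
      2 * {C : Set V | IsStrongComponent A C ∧ 1 < C.ncard}.ncard := hS₀card
  constructor
  · apply le_antisymm
    · exact le_trans (Nat.sInf_le hmem_p3s) (le_of_eq hb)
    · refine le_csInf ⟨S₀.ncard, hmem_p3s⟩ ?_
      rintro k ⟨S, hSh, rfl⟩
      exact lower_bound hT (hgeo_of_p3s S hSh)
  · apply le_antisymm
    · exact le_trans (Nat.sInf_le hmem_geo) (le_of_eq hb)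
    · refine le_csInf ⟨S₀.ncard, hmem_geo⟩ ?_
      rintro k ⟨S, hSh, rfl⟩
      exact lower_bound hT hSh
end

section
/- Let D be an oriented graph, let D' be a subdigraph of D, and let S be a minimum hull set of D in the P3 convexity. Then |S ∩ V(D')| ≤ hn_{P3}(D'), where hn_{P3}(D') is the P3 hull number of D'. -/
lemma hullD_convex {V : Type*} (I : V → V → Set V) (S : Set V) :
    IsConvexSet I (convexHullD I S) := by
  intro u hu v hv w hw
  apply Set.mem_sInter.mpr
  intro C hC
  exact hC.1 u (Set.mem_sInter.mp hu C hC) v (Set.mem_sInter.mp hv C hC) hw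

lemma subset_hullD {V : Type*} (I : V → V → Set V) (S : Set V) :
    S ⊆ convexHullD I S :=
  fun _ hx => Set.mem_sInter.mpr fun _ hC => hC.2 hx

lemma hullD_min {V : Type*} (I : V → V → Set V) (S C : Set V)
    (hC : IsConvexSet I C) (hSC : S ⊆ C) : convexHullD I S ⊆ C :=
  fun _ hx => Set.mem_sInter.mp hx C ⟨hC, hSC⟩

lemma univ_isHullSet {V : Type*} (I : V → V → Set V) :
    IsHullSet I (Set.univ : Set V) := by
  apply Set.eq_univ_of_univ_subset
  exact subset_hullD I Set.univ

/-- If `D'` (vertex set `W`, arc relation `A'`) is a subdigraph of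
`D` and `S` is a minimum P3 hull set of `D`, then `|S ∩ W| ≤ hn_{P3}(D')`. -/
theorem stmt_12 {V : Type*} [Finite V] (A : V → V → Prop) (hA : IsOriented A)
    (W : Set V) (A' : V → V → Prop)
    (hsub : ∀ u v, A' u v → A u v ∧ u ∈ W ∧ v ∈ W)
    (S : Set V) (hS : IsHullSet (p3Interval A) S)
    (hmin : S.ncard = hullNumber (p3Interval A)) :
    (S ∩ W).ncard ≤ hullNumber (p3Interval (fun a b : W => A' a.1 b.1)) := by
  classical
  set I' := p3Interval (fun a b : W => A' a.1 b.1) with hI'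
  have hne : (Set.univ : Set W).ncard ∈ {k | ∃ S : Set W, IsHullSet I' S ∧ S.ncard = k} :=
    ⟨Set.univ, univ_isHullSet I', rfl⟩
  obtain ⟨S', hS'hull, hS'card⟩ : ∃ S' : Set W, IsHullSet I' S' ∧ S'.ncard = hullNumber I' :=
    Nat.sInf_mem (Set.nonempty_of_mem hne)
  set T : Set V := (S \ W) ∪ (Subtype.val '' S') with hT
  -- T is a hull set of D
  have hWsub : W ⊆ convexHullD (p3Interval A) T := by
    set H := convexHullD (p3Interval A) T with hH
    have hHconv : IsConvexSet (p3Interval A) H := hullD_convex _ _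
    have hTH : T ⊆ H := subset_hullD _ _
    set C : Set W := Subtype.val ⁻¹' H with hC
    have hCconv : IsConvexSet I' C := by
      intro u hu v hv w hw
      rcases hw with hw | hw
      · rcases hw with hw | hw
        · subst hw; exact hu
        · simp only [Set.mem_singleton_iff] at hw; subst hw; exact hv
      · rcases hw with ⟨h1, h2⟩ | ⟨h1, h2⟩
        · exact hHconv _ hu _ hv (Or.inr (Or.inl ⟨(hsub _ _ h1).1, (hsub _ _ h2).1⟩))
        · exact hHconv _ hv _ hu (Or.inr (Or.inl ⟨(hsub _ _ h1).1, (hsub _ _ h2).1⟩))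
    have hS'C : S' ⊆ C := fun x hx => hTH (Or.inr ⟨x, hx, rfl⟩)
    have : (Set.univ : Set W) ⊆ C := by
      rw [← hS'hull]; exact hullD_min _ _ _ hCconv hS'C
    intro x hx
    exact this (Set.mem_univ (⟨x, hx⟩ : W))
  have hSsub : S ⊆ convexHullD (p3Interval A) T := by
    intro x hx
    by_cases hxW : x ∈ W
    · exact hWsub hxW
    · exact subset_hullD _ _ (Or.inl ⟨hx, hxW⟩)
  have hThull : IsHullSet (p3Interval A) T := by
    apply Set.eq_univ_of_univ_subset
    rw [← hS]
    exact hullD_min _ _ _ (hullD_convex _ _) hSsub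
  have h1 : S.ncard ≤ T.ncard := by
    rw [hmin]; exact Nat.sInf_le ⟨T, hThull, rfl⟩
  have h2 : T.ncard ≤ (S \ W).ncard + S'.ncard := by
    calc T.ncard ≤ (S \ W).ncard + (Subtype.val '' S').ncard := Set.ncard_union_le _ _
      _ = (S \ W).ncard + S'.ncard := by
          rw [Set.ncard_image_of_injective _ Subtype.val_injective]
  have h3 : (S ∩ W).ncard + (S \ W).ncard = S.ncard :=
    Set.ncard_inter_add_ncard_diff_eq_ncard S W (Set.toFinite S)
  rw [← hS'card]
  omega
end
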